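/- Let a, b, c be pairwise distinct real numbers and let α ≠ 0. Then R_{α,0,0} = {(x,0,0) : x ∈ ℝ} ∪ {(−α/(2(a−b)), y, 0) : y ∈ ℝ} ∪ {(−α/(2(a−c)), 0, z) : z ∈ ℝ}, i.e. the set of relative equilibria consists of the x-axis together with two lines crossing it, one parallel to the y-axis and one parallel to the z-axis. -/

import Mathlib

open Submodule Module

lemma rank_le_one_of_rows_mem_span (M : Matrix (Fin 2) (Fin 3) ℝ) (v : Fin 3 → ℝ)
    (h : ∀ i, M i ∈ Submodule.span ℝ ({v} : Set (Fin 3 → ℝ))) : M.rank ≤ 1 := by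
  rw [Matrix.rank_eq_finrank_span_row]
  have hle : Submodule.span ℝ (Set.range M) ≤ Submodule.span ℝ {v} :=
    Submodule.span_le.mpr (Set.range_subset_iff.mpr h)
  calc finrank ℝ (Submodule.span ℝ (Set.range M))
      ≤ finrank ℝ (Submodule.span ℝ ({v} : Set (Fin 3 → ℝ))) := Submodule.finrank_mono hle
    _ ≤ ({v} : Set (Fin 3 → ℝ)).toFinset.card := finrank_span_le_card _
    _ ≤ 1 := by simp

lemma minor_eq_zero_of_rank_le_one (M : Matrix (Fin 2) (Fin 3) ℝ) (h : M.rank ≤ 1)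
    (i j : Fin 3) : M 0 i * M 1 j - M 0 j * M 1 i = 0 := by
  by_contra hd
  have hli : LinearIndependent ℝ M := by
    apply Fintype.linearIndependent_iff.mpr
    intro g hg
    have hi := congrFun hg i
    have hj := congrFun hg j
    simp [Fin.sum_univ_two] at hi hj
    have h0 : g 0 = 0 := by
      have : g 0 * (M 0 i * M 1 j - M 0 j * M 1 i) = 0 := by
        linear_combination M 1 j * hi - M 1 i * hj
      exact (mul_eq_zero.mp this).resolve_right hd
    have h1 : g 1 = 0 := by
      have : g 1 * (M 0 i * M 1 j - M 0 j * M 1 i) = 0 := by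
        linear_combination M 0 i * hj - M 0 j * hi
      exact (mul_eq_zero.mp this).resolve_right hd
    intro k; fin_cases k <;> assumption
  rw [hli.rank_matrix] at h
  simp at h

/-- For pairwise distinct `a b c` and `α ≠ 0`, the set `R_{α,0,0}`
is the x-axis together with a line parallel to the y-axis through
`(−α/(2(a−b)), 0, 0)` and a line parallel to the z-axis through `(−α/(2(a−c)), 0, 0)`. -/
theorem stmt_4 (a b c α : ℝ) (hab : a ≠ b) (hbc : b ≠ c) (hac : a ≠ c) (hα : α ≠ 0) :
    {p : ℝ × ℝ × ℝ |
        (!![2*a*p.1 + α, 2*b*p.2.1, 2*c*p.2.2; p.1, p.2.1, p.2.2] :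
          Matrix (Fin 2) (Fin 3) ℝ).rank ≤ 1} =
      {q : ℝ × ℝ × ℝ | ∃ x : ℝ, q = (x, 0, 0)} ∪
      {q : ℝ × ℝ × ℝ | ∃ y : ℝ, q = (-α / (2*(a-b)), y, 0)} ∪
      {q : ℝ × ℝ × ℝ | ∃ z : ℝ, q = (-α / (2*(a-c)), 0, z)} := by
  have hab' : a - b ≠ 0 := sub_ne_zero.mpr hab
  have hac' : a - c ≠ 0 := sub_ne_zero.mpr hac
  have hbc' : b - c ≠ 0 := sub_ne_zero.mpr hbc
  ext ⟨x, y, z⟩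
  constructor
  · intro h
    simp only [Set.mem_setOf_eq] at h
    set M : Matrix (Fin 2) (Fin 3) ℝ := !![2*a*x + α, 2*b*y, 2*c*z; x, y, z] with hM
    have m01 := minor_eq_zero_of_rank_le_one M h 0 1
    have m02 := minor_eq_zero_of_rank_le_one M h 0 2
    have m12 := minor_eq_zero_of_rank_le_one M h 1 2
    simp only [hM, Matrix.cons_val', Matrix.cons_val_zero, Matrix.cons_val_one,
      Matrix.head_cons, Matrix.head_fin_const, Matrix.empty_val', Matrix.cons_val_fin_one,
      Matrix.of_apply, Matrix.cons_val_two, Matrix.tail_cons] at m01 m02 m12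
    by_cases hy : y = 0
    · by_cases hz : z = 0
      · exact Or.inl (Or.inl ⟨x, by simp [hy, hz]⟩)
      · refine Or.inr ⟨z, ?_⟩
        have h2 : 2*(a-c)*x + α = 0 := by
          have hz2 : z * (2*(a-c)*x + α) = 0 := by linear_combination m02
          exact (mul_eq_zero.mp hz2).resolve_left hz
        have hx : x = -α / (2*(a-c)) := by field_simp; linarith
        simp [hx, hy]
    · have hyz : y * z = 0 := by
        have : (2*(b-c)) * (y*z) = 0 := by linear_combination m12
        exact (mul_eq_zero.mp this).resolve_left (by
          intro hh; exact hbc' (by linarith))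
      have hz : z = 0 := (mul_eq_zero.mp hyz).resolve_left hy
      refine Or.inl (Or.inr ⟨y, ?_⟩)
      have h2 : 2*(a-b)*x + α = 0 := by
        have hy2 : y * (2*(a-b)*x + α) = 0 := by linear_combination m01
        exact (mul_eq_zero.mp hy2).resolve_left hy
      have hx : x = -α / (2*(a-b)) := by field_simp; linarith
      simp [hx, hz]
  · intro h
    simp only [Set.mem_setOf_eq]
    set M : Matrix (Fin 2) (Fin 3) ℝ := !![2*a*x + α, 2*b*y, 2*c*z; x, y, z] with hM
    rcases h with ((⟨x', hq⟩ | ⟨y', hq⟩) | ⟨z', hq⟩) <;>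
      simp only [Prod.mk.injEq] at hq
    · obtain ⟨hx, hy, hz⟩ := hq
      subst hy; subst hz
      refine rank_le_one_of_rows_mem_span M ![1, 0, 0] ?_
      intro i; fin_cases i
      · show M 0 ∈ _
        rw [Submodule.mem_span_singleton]
        exact ⟨2*a*x + α, by funext j; fin_cases j <;> simp [hM]⟩
      · show M 1 ∈ _
        rw [Submodule.mem_span_singleton]
        exact ⟨x, by funext j; fin_cases j <;> simp [hM]⟩
    · obtain ⟨hx, hy, hz⟩ := hq
      subst hx; subst hz
      have key : M 0 = (2*b) • M 1 := by
        funext j; fin_cases j <;>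
          simp [hM, Pi.smul_apply, smul_eq_mul]
        field_simp; ring
      refine rank_le_one_of_rows_mem_span M (M 1) ?_
      intro i; fin_cases i
      · show M 0 ∈ _
        rw [key]
        exact Submodule.smul_mem _ _ (Submodule.mem_span_singleton_self _)
      · exact Submodule.mem_span_singleton_self _
    · obtain ⟨hx, hy, hz⟩ := hq
      subst hx; subst hy
      have key : M 0 = (2*c) • M 1 := by
        funext j; fin_cases j <;>
          simp [hM, Pi.smul_apply, smul_eq_mul]
        field_simp; ring
      refine rank_le_one_of_rows_mem_span M (M 1) ?_
      intro i; fin_cases i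
      · show M 0 ∈ _
        rw [key]
        exact Submodule.smul_mem _ _ (Submodule.mem_span_singleton_self _)
      · exact Submodule.mem_span_singleton_self _
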